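/- Let C ⊆ F_2^n be a linear code with weight distribution (a_0,...,a_n). Then for every 0 ≤ α ≤ 1, Σ_{k=0}^n a_k α^{n-k} ≤ Σ_{k=0}^n a_k α^k. -/

import Mathlib

open Finset

/-- Number of codewords of `C` of Hamming weight `k`. -/
noncomputable def wtDist (n : ℕ) (C : Submodule (ZMod 2) (Fin n → ZMod 2)) (k : ℕ) : ℕ :=
  Nat.card {x : Fin n → ZMod 2 // x ∈ C ∧ hammingNorm x = k}

namespace WDRaux

/-- The real-valued character of `ZMod 2`. -/
def χ (c : ZMod 2) : ℝ := if c = 0 then 1 else -1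

lemma chi_zero : χ 0 = 1 := by simp [χ]

lemma chi_one : χ 1 = -1 := by
  have : (1 : ZMod 2) ≠ 0 := by decide
  simp [χ, this]

lemma chi_add (a b : ZMod 2) : χ (a + b) = χ a * χ b := by
  have h11 : (1 + 1 : ZMod 2) = 0 := by decide
  rcases (show ∀ c : ZMod 2, c = 0 ∨ c = 1 by decide) a with rfl | rfl <;>
    rcases (show ∀ c : ZMod 2, c = 0 ∨ c = 1 by decide) b with rfl | rfl <;>
    simp [h11, chi_zero, chi_one]

lemma prod_chi {n : ℕ} (T : Finset (Fin n)) (x : Fin n → ZMod 2) :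
    ∏ i ∈ T, χ (x i) = χ (∑ i ∈ T, x i) := by
  induction T using Finset.induction with
  | empty => simp [chi_zero]
  | @insert a s ha ih => rw [prod_insert ha, sum_insert ha, chi_add, ih]

lemma S_nonneg {n : ℕ} (C : Submodule (ZMod 2) (Fin n → ZMod 2)) [DecidablePred (· ∈ C)]
    (T : Finset (Fin n)) :
    0 ≤ ∑ x ∈ Finset.univ.filter (· ∈ C), ∏ i ∈ T, χ (x i) := by
  by_cases h : ∀ x ∈ C, ∑ i ∈ T, x i = 0
  · have h1 : ∀ x ∈ Finset.univ.filter (· ∈ C), ∏ i ∈ T, χ (x i) = 1 := by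
      intro x hx
      rw [prod_chi, h x (mem_filter.mp hx).2, chi_zero]
    rw [Finset.sum_congr rfl h1, Finset.sum_const, nsmul_eq_mul, mul_one]
    positivity
  · push_neg at h
    obtain ⟨x0, hx0C, hx0⟩ := h
    have hone : ∀ c : ZMod 2, c ≠ 0 → c = 1 := by decide
    have hx0' : ∑ i ∈ T, x0 i = 1 := hone _ hx0
    have hcc : ∀ c : ZMod 2, c + c = 0 := by decide
    have key : (∑ x ∈ Finset.univ.filter (· ∈ C), ∏ i ∈ T, χ (x i))
        = ∑ x ∈ Finset.univ.filter (· ∈ C), -(∏ i ∈ T, χ (x i)) := by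
      apply Finset.sum_nbij' (fun x => x + x0) (fun x => x + x0)
      · intro a ha
        simp only [mem_filter, mem_univ, true_and] at ha ⊢
        exact C.add_mem ha hx0C
      · intro a ha
        simp only [mem_filter, mem_univ, true_and] at ha ⊢
        exact C.add_mem ha hx0C
      · intro a _
        funext i
        show a i + x0 i + x0 i = a i
        rw [add_assoc, hcc, add_zero]
      · intro a _
        funext i
        show a i + x0 i + x0 i = a i
        rw [add_assoc, hcc, add_zero]
      · intro a _
        rw [prod_chi, prod_chi]
        have : ∑ i ∈ T, (a + x0) i = (∑ i ∈ T, a i) + 1 := by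
          rw [← hx0', ← Finset.sum_add_distrib]; rfl
        rw [this, chi_add, chi_one]
        ring
    simp only [Finset.sum_neg_distrib] at key
    linarith

lemma expand {n : ℕ} (a b : ℝ) (x : Fin n → ZMod 2) :
    ∏ i, (b * χ (x i) + a) =
      ∑ T ∈ (Finset.univ : Finset (Fin n)).powerset,
        b ^ T.card * (∏ i ∈ T, χ (x i)) * a ^ (n - T.card) := by
  rw [Finset.prod_add]
  refine Finset.sum_congr rfl fun T hT => ?_
  have hTsub : T ⊆ Finset.univ := Finset.mem_powerset.mp hT
  rw [Finset.prod_const, Finset.card_sdiff_of_subset hTsub, Finset.card_univ, Fintype.card_fin,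
    Finset.prod_mul_distrib, Finset.prod_const]

lemma prod_eq_pow_norm {n : ℕ} (α : ℝ) (x : Fin n → ZMod 2) :
    ∏ i, (((1 - α) / 2) * χ (x i) + (1 + α) / 2) = α ^ hammingNorm x := by
  have h1 : ∀ i, ((1 - α) / 2) * χ (x i) + (1 + α) / 2
      = if x i ≠ 0 then α else 1 := by
    intro i
    by_cases h : x i = 0
    · simp [h, chi_zero]; ring
    · simp [h, χ]; ring
  rw [Finset.prod_congr rfl fun i _ => h1 i, Finset.prod_ite, Finset.prod_const,
    Finset.prod_const, one_pow, mul_one]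
  rfl

lemma prod_eq_pow_conorm {n : ℕ} (α : ℝ) (x : Fin n → ZMod 2) :
    ∏ i, ((-((1 - α) / 2)) * χ (x i) + (1 + α) / 2) = α ^ (n - hammingNorm x) := by
  have h1 : ∀ i, (-((1 - α) / 2)) * χ (x i) + (1 + α) / 2
      = if x i ≠ 0 then 1 else α := by
    intro i
    by_cases h : x i = 0
    · simp [h, chi_zero]; ring
    · simp [h, χ]; ring
  rw [Finset.prod_congr rfl fun i _ => h1 i, Finset.prod_ite, Finset.prod_const,
    Finset.prod_const, one_pow, one_mul]
  congr 1
  have := Finset.card_filter_add_card_filter_not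
    (s := (Finset.univ : Finset (Fin n))) (p := fun i => x i ≠ 0)
  simp only [Finset.card_univ, Fintype.card_fin] at this
  have hnorm : hammingNorm x = (Finset.univ.filter fun i => x i ≠ 0).card := rfl
  omega

end WDRaux

open WDRaux

theorem weight_distribution_reflection (n : ℕ) (C : Submodule (ZMod 2) (Fin n → ZMod 2))
    (α : ℝ) (hα0 : 0 ≤ α) (hα1 : α ≤ 1) :
    ∑ k ∈ Finset.range (n + 1), (wtDist n C k : ℝ) * α ^ (n - k) ≤
      ∑ k ∈ Finset.range (n + 1), (wtDist n C k : ℝ) * α ^ k := by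
  classical
  set Cfin : Finset (Fin n → ZMod 2) := Finset.univ.filter (· ∈ C) with hCfin
  -- Step 1: rewrite both sides as sums over Cfin
  have fib : ∀ g : ℕ → ℝ,
      ∑ k ∈ Finset.range (n + 1), (wtDist n C k : ℝ) * g k
        = ∑ x ∈ Cfin, g (hammingNorm x) := by
    intro g
    rw [← Finset.sum_fiberwise_of_maps_to (g := hammingNorm) (t := Finset.range (n + 1))
      (fun x _ => Finset.mem_range.mpr (Nat.lt_succ_of_le
        (le_trans hammingNorm_le_card_fintype (by simp)))) (fun x => g (hammingNorm x))]
    refine Finset.sum_congr rfl fun k _ => ?_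
    have hcard : wtDist n C k = (Cfin.filter fun x => hammingNorm x = k).card := by
      rw [wtDist, Nat.card_eq_fintype_card, Fintype.card_subtype]
      congr 1
      ext x
      simp [hCfin, and_comm]
    calc (wtDist n C k : ℝ) * g k
        = ∑ _x ∈ Cfin.filter fun x => hammingNorm x = k, g k := by
          rw [Finset.sum_const, hcard, nsmul_eq_mul]
      _ = ∑ x ∈ Cfin.filter fun x => hammingNorm x = k, g (hammingNorm x) := by
          refine Finset.sum_congr rfl fun x hx => ?_
          rw [(Finset.mem_filter.mp hx).2]
  rw [fib (fun k => α ^ (n - k)), fib (fun k => α ^ k)]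
  -- Step 2: Fourier expansion
  set a : ℝ := (1 + α) / 2 with ha
  set b : ℝ := (1 - α) / 2 with hb
  have ha0 : 0 ≤ a := by rw [ha]; linarith
  have hb0 : 0 ≤ b := by rw [hb]; linarith
  have key : ∀ c : ℝ, ∑ x ∈ Cfin, ∏ i, (c * χ (x i) + a)
      = ∑ T ∈ (Finset.univ : Finset (Fin n)).powerset,
          c ^ T.card * (∑ x ∈ Cfin, ∏ i ∈ T, χ (x i)) * a ^ (n - T.card) := by
    intro c
    rw [Finset.sum_congr rfl fun x _ => expand a c x, Finset.sum_comm]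
    refine Finset.sum_congr rfl fun T _ => ?_
    rw [Finset.mul_sum, Finset.sum_mul]
  have lhs_eq : ∑ x ∈ Cfin, α ^ (n - hammingNorm x)
      = ∑ T ∈ (Finset.univ : Finset (Fin n)).powerset,
          (-b) ^ T.card * (∑ x ∈ Cfin, ∏ i ∈ T, χ (x i)) * a ^ (n - T.card) := by
    rw [← key (-b)]
    exact Finset.sum_congr rfl fun x _ => (prod_eq_pow_conorm α x).symm
  have rhs_eq : ∑ x ∈ Cfin, α ^ hammingNorm x
      = ∑ T ∈ (Finset.univ : Finset (Fin n)).powerset,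
          b ^ T.card * (∑ x ∈ Cfin, ∏ i ∈ T, χ (x i)) * a ^ (n - T.card) := by
    rw [← key b]
    exact Finset.sum_congr rfl fun x _ => (prod_eq_pow_norm α x).symm
  rw [lhs_eq, rhs_eq]
  -- Step 3: termwise comparison
  refine Finset.sum_le_sum fun T _ => ?_
  have hS : 0 ≤ ∑ x ∈ Cfin, ∏ i ∈ T, χ (x i) := S_nonneg C T
  have hpow : (-b) ^ T.card ≤ b ^ T.card := by
    calc (-b) ^ T.card ≤ |(-b) ^ T.card| := le_abs_self _
      _ = b ^ T.card := by rw [abs_pow, abs_neg, abs_of_nonneg hb0]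
  have h1 : (-b) ^ T.card * (∑ x ∈ Cfin, ∏ i ∈ T, χ (x i))
      ≤ b ^ T.card * (∑ x ∈ Cfin, ∏ i ∈ T, χ (x i)) :=
    mul_le_mul_of_nonneg_right hpow hS
  exact mul_le_mul_of_nonneg_right h1 (pow_nonneg ha0 _)
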